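/- Let D be a division ring, m ≥ 1, and let r, r' be natural numbers with 0 ≤ r, r' ≤ m. Let A ∈ M_r(D) and A' ∈ M_{r'}(D) be invertible, and set X_A = fromBlocks(0, fromBlocks(1_r,0,0,0), fromBlocks(A,0,0,0), 0) ∈ M_{2m}(D) and similarly X_{A'} (with blocks of sizes r', m−r'). If there exist invertible h₁, h₂ ∈ M_m(D) such that fromBlocks(h₁,0,0,h₂)·X_A·fromBlocks(h₁,0,0,h₂)⁻¹ = X_{A'}, then r = r' and there exists an invertible g ∈ M_r(D) with g·A·g⁻¹ = A'. -/

import Mathlib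

open Matrix

set_option maxHeartbeats 1000000

private lemma normal_form_uniqueness_aux {D : Type*} [DivisionRing D] {m r r' : ℕ}
    (A : Matrix (Fin r) (Fin r) D) (hA : IsUnit A)
    (A' : Matrix (Fin r') (Fin r') D) (hA' : IsUnit A')
    (h₁ h₂ : (Matrix (Fin m) (Fin m) D)ˣ)
    (e : Fin r ⊕ Fin (m - r) ≃ Fin m) (e' : Fin r' ⊕ Fin (m - r') ≃ Fin m)
    (H : Matrix.fromBlocks h₁.val 0 0 h₂.val *
        (Matrix.fromBlocks 0 (Matrix.reindex e e (Matrix.fromBlocks 1 0 0 0))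
          (Matrix.reindex e e (Matrix.fromBlocks A 0 0 0)) 0) *
        Matrix.fromBlocks (h₁⁻¹).val 0 0 (h₂⁻¹).val =
        Matrix.fromBlocks 0 (Matrix.reindex e' e' (Matrix.fromBlocks 1 0 0 0))
          (Matrix.reindex e' e' (Matrix.fromBlocks A' 0 0 0)) 0) :
    ∃ (hrr : r = r') (g : (Matrix (Fin r) (Fin r) D)ˣ),
      g.val * A * (g⁻¹).val =
        Matrix.reindex (finCongr hrr.symm) (finCongr hrr.symm) A' := by
  obtain ⟨a, p, hap, hpa, hcomm⟩ :
      ∃ (a : Matrix (Fin r') (Fin r) D) (p : Matrix (Fin r) (Fin r') D),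
        a * p = 1 ∧ p * a = 1 ∧ a * A = A' * a := by
    -- unpack the conjugation equation into block equations
    rw [Matrix.fromBlocks_multiply, Matrix.fromBlocks_multiply] at H
    simp only [Matrix.mul_zero, Matrix.zero_mul, add_zero, zero_add] at H
    rw [Matrix.fromBlocks_inj] at H
    obtain ⟨-, E1, E2, -⟩ := H
    have hinv2 : (h₂⁻¹).val * h₂.val = 1 := h₂.inv_mul
    have hinv1 : (h₁⁻¹).val * h₁.val = 1 := h₁.inv_mul
    have E1' : h₁.val * reindex e e (fromBlocks 1 0 0 0)
        = reindex e' e' (fromBlocks 1 0 0 0) * h₂.val := by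
      conv_lhs => rw [← Matrix.mul_one (h₁.val * reindex e e (fromBlocks 1 0 0 0)), ← hinv2]
      rw [← Matrix.mul_assoc, E1]
    have E2' : h₂.val * reindex e e (fromBlocks A 0 0 0)
        = reindex e' e' (fromBlocks A' 0 0 0) * h₁.val := by
      conv_lhs => rw [← Matrix.mul_one (h₂.val * reindex e e (fromBlocks A 0 0 0)), ← hinv1]
      rw [← Matrix.mul_assoc, E2]
    -- pass to submatrices along e, e'
    have hsub : ∀ (Q : Matrix (Fin r ⊕ Fin (m - r)) (Fin r ⊕ Fin (m - r)) D),
        (reindex e e Q).submatrix ⇑e ⇑e = Q := by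
      intro Q
      simp [Matrix.reindex_apply, Matrix.submatrix_submatrix]
    have hsub' : ∀ (Q : Matrix (Fin r' ⊕ Fin (m - r')) (Fin r' ⊕ Fin (m - r')) D),
        (reindex e' e' Q).submatrix ⇑e' ⇑e' = Q := by
      intro Q
      simp [Matrix.reindex_apply, Matrix.submatrix_submatrix]
    have key1 : h₁.val.submatrix ⇑e' ⇑e * (fromBlocks 1 0 0 0 : Matrix (Fin r ⊕ Fin (m - r)) (Fin r ⊕ Fin (m - r)) D)
        = (fromBlocks 1 0 0 0 : Matrix (Fin r' ⊕ Fin (m - r')) (Fin r' ⊕ Fin (m - r')) D) * h₂.val.submatrix ⇑e' ⇑e := by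
      calc h₁.val.submatrix ⇑e' ⇑e * (fromBlocks 1 0 0 0 : Matrix (Fin r ⊕ Fin (m - r)) (Fin r ⊕ Fin (m - r)) D)
          = h₁.val.submatrix ⇑e' ⇑e *
            (reindex e e (fromBlocks 1 0 0 0)).submatrix ⇑e ⇑e := by rw [hsub]; rfl
        _ = (h₁.val * reindex e e (fromBlocks 1 0 0 0)).submatrix ⇑e' ⇑e :=
            Matrix.submatrix_mul_equiv _ _ _ e _
        _ = (reindex e' e' (fromBlocks 1 0 0 0) * h₂.val).submatrix ⇑e' ⇑e := by rw [E1']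
        _ = (reindex e' e' (fromBlocks 1 0 0 0)).submatrix ⇑e' ⇑e' *
            h₂.val.submatrix ⇑e' ⇑e := (Matrix.submatrix_mul_equiv _ _ _ e' _).symm
        _ = (fromBlocks 1 0 0 0 : Matrix (Fin r' ⊕ Fin (m - r')) (Fin r' ⊕ Fin (m - r')) D) * h₂.val.submatrix ⇑e' ⇑e := by rw [hsub']; rfl
    have key2 : h₂.val.submatrix ⇑e' ⇑e * (fromBlocks A 0 0 0 : Matrix (Fin r ⊕ Fin (m - r)) (Fin r ⊕ Fin (m - r)) D)
        = (fromBlocks A' 0 0 0 : Matrix (Fin r' ⊕ Fin (m - r')) (Fin r' ⊕ Fin (m - r')) D) * h₁.val.submatrix ⇑e' ⇑e := by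
      calc h₂.val.submatrix ⇑e' ⇑e * (fromBlocks A 0 0 0 : Matrix (Fin r ⊕ Fin (m - r)) (Fin r ⊕ Fin (m - r)) D)
          = h₂.val.submatrix ⇑e' ⇑e *
            (reindex e e (fromBlocks A 0 0 0)).submatrix ⇑e ⇑e := by rw [hsub]
        _ = (h₂.val * reindex e e (fromBlocks A 0 0 0)).submatrix ⇑e' ⇑e :=
            Matrix.submatrix_mul_equiv _ _ _ e _
        _ = (reindex e' e' (fromBlocks A' 0 0 0) * h₁.val).submatrix ⇑e' ⇑e := by rw [E2']
        _ = (reindex e' e' (fromBlocks A' 0 0 0)).submatrix ⇑e' ⇑e' *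
            h₁.val.submatrix ⇑e' ⇑e := (Matrix.submatrix_mul_equiv _ _ _ e' _).symm
        _ = (fromBlocks A' 0 0 0 : Matrix (Fin r' ⊕ Fin (m - r')) (Fin r' ⊕ Fin (m - r')) D) * h₁.val.submatrix ⇑e' ⇑e := by rw [hsub']
    have hvinv : h₁.val * (h₁⁻¹).val = 1 := h₁.mul_inv
    have inv1 : h₁.val.submatrix ⇑e' ⇑e * (h₁⁻¹).val.submatrix ⇑e ⇑e' = 1 := by
      rw [Matrix.submatrix_mul_equiv _ _ _ e _, hvinv, Matrix.submatrix_one_equiv]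
    have inv2 : (h₁⁻¹).val.submatrix ⇑e ⇑e' * h₁.val.submatrix ⇑e' ⇑e = 1 := by
      rw [Matrix.submatrix_mul_equiv _ _ _ e' _, hinv1, Matrix.submatrix_one_equiv]
    -- decompose into blocks
    obtain ⟨mA, mB, mC, mD, hM⟩ :
        ∃ a b c d, h₁.val.submatrix ⇑e' ⇑e = fromBlocks a b c d :=
      ⟨_, _, _, _, (Matrix.fromBlocks_toBlocks _).symm⟩
    obtain ⟨nA, nB, nC, nD, hN⟩ :
        ∃ a b c d, h₂.val.submatrix ⇑e' ⇑e = fromBlocks a b c d :=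
      ⟨_, _, _, _, (Matrix.fromBlocks_toBlocks _).symm⟩
    obtain ⟨pA, pB, pC, pD, hP⟩ :
        ∃ a b c d, (h₁⁻¹).val.submatrix ⇑e ⇑e' = fromBlocks a b c d :=
      ⟨_, _, _, _, (Matrix.fromBlocks_toBlocks _).symm⟩
    rw [hM, hN, Matrix.fromBlocks_multiply, Matrix.fromBlocks_multiply,
      Matrix.fromBlocks_inj] at key1
    obtain ⟨k11, k12, k13, -⟩ := key1
    rw [hM, hN, Matrix.fromBlocks_multiply, Matrix.fromBlocks_multiply,
      Matrix.fromBlocks_inj] at key2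
    obtain ⟨k21, k22, -, -⟩ := key2
    simp only [Matrix.mul_one, Matrix.mul_zero, Matrix.zero_mul, Matrix.one_mul,
      add_zero, zero_add] at k11 k12 k13 k21 k22
    -- mB = 0 since A' is invertible
    obtain ⟨u', hu'⟩ := hA'
    have hmB : mB = 0 := by
      calc mB = (u'⁻¹).val * u'.val * mB := by rw [u'.inv_mul, Matrix.one_mul]
        _ = (u'⁻¹).val * (A' * mB) := by rw [Matrix.mul_assoc, hu']
        _ = 0 := by rw [← k22, Matrix.mul_zero]
    have hmC : mC = 0 := k13
    rw [hmB, hmC] at hM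
    rw [hM, hP, ← Matrix.fromBlocks_one, Matrix.fromBlocks_multiply,
      Matrix.fromBlocks_inj] at inv1 inv2
    obtain ⟨i11, -, -, -⟩ := inv1
    obtain ⟨i21, -, -, -⟩ := inv2
    simp only [Matrix.mul_zero, Matrix.zero_mul, add_zero, zero_add] at i11 i21
    refine ⟨mA, pA, i11, i21, ?_⟩
    rw [k11, k21, k11]
  -- rank argument : r = r'
  have hrr : r = r' := by
    have elin : (Fin r' → D) ≃ₗ[D] (Fin r → D) :=
      LinearEquiv.ofLinear (Matrix.vecMulLinear a) (Matrix.vecMulLinear p)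
        (by
          apply LinearMap.ext; intro v
          simp [Matrix.vecMulLinear_apply, Matrix.vecMul_vecMul, hpa])
        (by
          apply LinearMap.ext; intro v
          simp [Matrix.vecMulLinear_apply, Matrix.vecMul_vecMul, hap])
    have := elin.finrank_eq
    simpa [Module.finrank_fin_fun] using this.symm
  subst hrr
  refine ⟨rfl, ⟨a, p, hap, hpa⟩, ?_⟩
  simp only [Units.inv_mk]
  calc a * A * p = A' * a * p := by rw [hcomm]
    _ = A' * (a * p) := by rw [Matrix.mul_assoc]
    _ = A' := by rw [hap, Matrix.mul_one]
  -- handle reindex (finCongr rfl)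


/-- Uniqueness in the normal form `X(A)`: if `fromBlocks h₁ 0 0 h₂` conjugates `X_A` to
`X_{A'}`, then `r = r'` and `A` is conjugate to `A'`. -/
theorem normal_form_uniqueness {D : Type*} [DivisionRing D] {m r r' : ℕ} (hm : 1 ≤ m)
    (hr : r ≤ m) (hr' : r' ≤ m)
    (A : Matrix (Fin r) (Fin r) D) (hA : IsUnit A)
    (A' : Matrix (Fin r') (Fin r') D) (hA' : IsUnit A')
    (h₁ h₂ : (Matrix (Fin m) (Fin m) D)ˣ) :
    let e : Fin r ⊕ Fin (m - r) ≃ Fin m :=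
      finSumFinEquiv.trans (finCongr (Nat.add_sub_cancel' hr))
    let e' : Fin r' ⊕ Fin (m - r') ≃ Fin m :=
      finSumFinEquiv.trans (finCongr (Nat.add_sub_cancel' hr'))
    let XA : Matrix (Fin m ⊕ Fin m) (Fin m ⊕ Fin m) D :=
      Matrix.fromBlocks 0 (Matrix.reindex e e (Matrix.fromBlocks 1 0 0 0))
        (Matrix.reindex e e (Matrix.fromBlocks A 0 0 0)) 0
    let XA' : Matrix (Fin m ⊕ Fin m) (Fin m ⊕ Fin m) D :=
      Matrix.fromBlocks 0 (Matrix.reindex e' e' (Matrix.fromBlocks 1 0 0 0))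
        (Matrix.reindex e' e' (Matrix.fromBlocks A' 0 0 0)) 0
    Matrix.fromBlocks h₁.val 0 0 h₂.val * XA * Matrix.fromBlocks (h₁⁻¹).val 0 0 (h₂⁻¹).val =
        XA' →
      ∃ (hrr : r = r') (g : (Matrix (Fin r) (Fin r) D)ˣ),
        g.val * A * (g⁻¹).val =
          Matrix.reindex (finCongr hrr.symm) (finCongr hrr.symm) A' := by
  intro e e' XA XA' H
  exact normal_form_uniqueness_aux A hA A' hA' h₁ h₂ e e' H
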